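/- Every nonzero 2-dimensional Zinbiel algebra over ℂ is isomorphic to the algebra with basis e1, e2 and multiplication e1·e1 = e2, all other products of basis elements being zero. -/

import Mathlib

noncomputable section

/-- The 2-dimensional complex vector space. -/
abbrev V2 : Type := Fin 2 → ℂ

/-- The bilinear multiplication on `V2` determined by a table of structure constants:
`c i j` is the product of the `i`-th and `j`-th basis vectors. -/
def tm (c : Fin 2 → Fin 2 → V2) : V2 → V2 → V2 :=
  fun x y => ∑ i, ∑ j, (x i * y j) • c i j

/-- Multiplication table with the given values of `e1*e1`, `e1*e2`, `e2*e1`, `e2*e2`. -/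
def tbl (a b c d : V2) : Fin 2 → Fin 2 → V2 := ![![a, b], ![c, d]]

/-- The zero multiplication on `V2`. -/
def zm : V2 → V2 → V2 := fun _ _ => 0

/-- Isomorphism of algebras with one multiplication: a ℂ-linear bijection preserving
the multiplication. -/
def Iso1 {A : Type*} [AddCommGroup A] [Module ℂ A] {B : Type*} [AddCommGroup B]
    [Module ℂ B] (μ : A → A → A) (ν : B → B → B) : Prop :=
  ∃ φ : A ≃ₗ[ℂ] B, ∀ x y, φ (μ x y) = ν (φ x) (φ y)

/-- Isomorphism of algebras with two multiplications: a ℂ-linear bijection preserving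
both multiplications. -/
def Iso2 {A : Type*} [AddCommGroup A] [Module ℂ A] {B : Type*} [AddCommGroup B]
    [Module ℂ B] (μ₁ μ₂ : A → A → A) (ν₁ ν₂ : B → B → B) : Prop :=
  ∃ φ : A ≃ₗ[ℂ] B,
    (∀ x y, φ (μ₁ x y) = ν₁ (φ x) (φ y)) ∧ (∀ x y, φ (μ₂ x y) = ν₂ (φ x) (φ y))

/-- The commutative associative algebra A01: `e1·e1 = e1`, `e2·e2 = e2`. -/
def cA01 : Fin 2 → Fin 2 → V2 := tbl ![1,0] 0 0 ![0,1]

/-- The commutative associative algebra A02: `e1·e1 = e1`, `e1·e2 = e2·e1 = e2`. -/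
def cA02 : Fin 2 → Fin 2 → V2 := tbl ![1,0] ![0,1] ![0,1] 0

/-- The commutative associative algebra A03: `e1·e1 = e1`. -/
def cA03 : Fin 2 → Fin 2 → V2 := tbl ![1,0] 0 0 0

/-- The commutative associative algebra A04: `e1·e1 = e2`. -/
def cA04 : Fin 2 → Fin 2 → V2 := tbl ![0,1] 0 0 0

/-- Every nonzero 2-dimensional Zinbiel algebra over ℂ is isomorphic
to the algebra with `e1·e1 = e2` and all other products of basis elements zero. -/
theorem statement18 (A : Type*) [AddCommGroup A] [Module ℂ A]
    (hdim : Module.finrank ℂ A = 2)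
    (mul : A →ₗ[ℂ] A →ₗ[ℂ] A)
    (hzin : ∀ x y z : A, mul x (mul y z) = mul (mul y x + mul x y) z)
    (hnz : ∃ x y : A, mul x y ≠ 0) :
    Iso1 (fun x y => mul x y) (tm (tbl ![0,1] 0 0 0)) := by
  -- Step A: there is e with mul e e ≠ 0
  have hsq : ∃ e : A, mul e e ≠ 0 := by
    by_contra hc
    push_neg at hc
    obtain ⟨x, y, hxy⟩ := hnz
    have hanti : ∀ a b : A, mul a b = - mul b a := by
      intro a b
      have h1 : mul (a + b) (a + b) = 0 := hc _
      simp only [map_add, LinearMap.add_apply, hc, zero_add, add_zero] at h1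
      exact eq_neg_of_add_eq_zero_right h1
    have hleft : ∀ a b c : A, mul a (mul b c) = 0 := by
      intro a b c
      rw [hzin a b c, hanti b a]
      simp
    have hx_ne : x ≠ 0 := by
      rintro rfl; exact hxy (by simp)
    have hind : LinearIndependent ℂ ![x, y] := by
      rw [LinearIndependent.pair_iff]
      intro s t hst
      rcases eq_or_ne t 0 with ht | ht
      · subst ht
        rw [zero_smul, add_zero, smul_eq_zero] at hst
        exact ⟨hst.resolve_right hx_ne, rfl⟩
      · exfalso
        have hy : y = (-(s/t)) • x := by
          have h2 : t • y = (-s) • x := by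
            rw [neg_smul, eq_neg_iff_add_eq_zero, add_comm]; exact hst
          calc y = t⁻¹ • (t • y) := by rw [smul_smul, inv_mul_cancel₀ ht, one_smul]
          _ = t⁻¹ • ((-s) • x) := by rw [h2]
          _ = (-(s/t)) • x := by rw [smul_smul]; congr 1; field_simp
        apply hxy
        rw [hy, map_smul, hc, smul_zero]
    have hcard : Fintype.card (Fin 2) = Module.finrank ℂ A := by simp [hdim]
    let b := basisOfLinearIndependentOfCardEqFinrank hind hcard
    have hb : ⇑b = ![x, y] := coe_basisOfLinearIndependentOfCardEqFinrank hind hcard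
    have hb0 : b 0 = x := by rw [hb]; rfl
    have hb1 : b 1 = y := by rw [hb]; rfl
    set w := mul x y with hw
    have hrepw : (b.repr w 0) • x + (b.repr w 1) • y = w := by
      have := b.sum_repr w
      rwa [Fin.sum_univ_two, hb0, hb1] at this
    have hxw : mul x w = (b.repr w 1) • w := by
      conv_lhs => rw [← hrepw]
      rw [map_add, map_smul, map_smul, hc, smul_zero, zero_add, ← hw]
    have h1 : (b.repr w 1) • w = 0 := by rw [← hxw, hw]; exact hleft _ _ _
    have hyw : mul y w = (b.repr w 0) • (mul y x) := by
      conv_lhs => rw [← hrepw]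
      rw [map_add, map_smul, map_smul, hc, smul_zero, add_zero]
    have h0 : (b.repr w 0) • w = 0 := by
      have h2 : mul y w = 0 := hleft _ _ _
      rw [hyw, hanti y x, ← hw, smul_neg, neg_eq_zero] at h2
      exact h2
    have c1 : b.repr w 1 = 0 := (smul_eq_zero.mp h1).resolve_right hxy
    have c0 : b.repr w 0 = 0 := (smul_eq_zero.mp h0).resolve_right hxy
    apply hxy
    rw [← hrepw, c0, c1, zero_smul, zero_smul, add_zero]
  -- Step B
  obtain ⟨e, he⟩ := hsq
  have he_ne : e ≠ 0 := by rintro rfl; exact he (by simp)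
  set u := mul e e with hu
  have hzee := hzin e e e
  rw [← hu] at hzee
  -- hzee : mul e u = mul (u + u) e
  have hind : LinearIndependent ℂ ![e, u] := by
    rw [LinearIndependent.pair_iff]
    intro s t hst
    rcases eq_or_ne t 0 with ht | ht
    · subst ht
      rw [zero_smul, add_zero, smul_eq_zero] at hst
      exact ⟨hst.resolve_right he_ne, rfl⟩
    · exfalso
      have h2 : t • u = (-s) • e := by
        rw [neg_smul, eq_neg_iff_add_eq_zero, add_comm]; exact hst
      have hy : u = (-(s/t)) • e := by
        calc u = t⁻¹ • (t • u) := by rw [smul_smul, inv_mul_cancel₀ ht, one_smul]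
        _ = t⁻¹ • ((-s) • e) := by rw [h2]
        _ = (-(s/t)) • e := by rw [smul_smul]; congr 1; field_simp
      set lam := -(s/t) with hlam
      have h3 : lam • u = lam • u + lam • u := by
        have l1 : mul e u = lam • u := by
          conv_lhs => rw [hy]
          rw [map_smul, ← hu]
        have l2 : mul (u + u) e = lam • u + lam • u := by
          rw [map_add, LinearMap.add_apply]
          have : mul u e = lam • u := by
            conv_lhs => rw [hy]
            rw [map_smul, LinearMap.smul_apply, ← hu]
          rw [this]
        rw [← l2, ← l1]; exact hzee
      have h4 : lam • u = 0 := by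
        have := h3
        nth_rewrite 1 [← add_zero (lam • u)] at this
        exact (add_left_cancel this).symm
      rcases smul_eq_zero.mp h4 with hl | hu0
      · rw [hl, zero_smul] at hy
        exact he hy
      · exact he hu0
  have hcard : Fintype.card (Fin 2) = Module.finrank ℂ A := by simp [hdim]
  let b := basisOfLinearIndependentOfCardEqFinrank hind hcard
  have hb : ⇑b = ![e, u] := coe_basisOfLinearIndependentOfCardEqFinrank hind hcard
  have hb0 : b 0 = e := by rw [hb]; rfl
  have hb1 : b 1 = u := by rw [hb]; rfl
  have hrep : ∀ z : A, (b.repr z 0) • e + (b.repr z 1) • u = z := by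
    intro z
    have := b.sum_repr z
    rwa [Fin.sum_univ_two, hb0, hb1] at this
  have hcoef : ∀ a₁ b₁ c₁ d₁ : ℂ, a₁ • e + b₁ • u = c₁ • e + d₁ • u → a₁ = c₁ ∧ b₁ = d₁ := by
    intro a₁ b₁ c₁ d₁ h
    have h0 : (a₁ - c₁) • e + (b₁ - d₁) • u = 0 := by
      linear_combination (norm := module) h
    obtain ⟨h1, h2⟩ := (LinearIndependent.pair_iff.mp hind) _ _ h0
    exact ⟨sub_eq_zero.mp h1, sub_eq_zero.mp h2⟩
  set α := b.repr (mul u e) 0 with hα_def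
  set β := b.repr (mul u e) 1 with hβ_def
  have hue : mul u e = α • e + β • u := (hrep _).symm
  have heu : mul e u = (2*α) • e + (2*β) • u := by
    rw [hzee, map_add, LinearMap.add_apply, hue]
    module
  have huu : mul u u = (3*(α*β)) • e + (3*α+3*(β*β)) • u := by
    have h := hzin u e e
    rw [← hu] at h
    rw [h]
    simp only [heu, hue, map_add, map_smul, LinearMap.add_apply, LinearMap.smul_apply, ← hu]
    module
  -- Zinbiel at (u, u, e)
  have L3 : mul u (mul u e) = (α^2+3*α*β^2) • e + (4*α*β+3*β^3) • u := by
    rw [hue]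
    simp only [map_add, map_smul, hue, huu]
    module
  have R3 : mul (mul u u + mul u u) e = (6*α^2+6*α*β^2) • e + (12*α*β+6*β^3) • u := by
    rw [huu]
    simp only [map_add, map_smul, LinearMap.add_apply, LinearMap.smul_apply, hue, ← hu]
    module
  obtain ⟨E1, E2⟩ := hcoef _ _ _ _ ((L3.symm.trans (hzin u u e)).trans R3)
  -- Zinbiel at (e, u, u)
  have L4 : mul e (mul u u) = (6*α^2+6*α*β^2) • e + (9*α*β+6*β^3) • u := by
    rw [huu]
    simp only [map_add, map_smul, hue, heu, ← hu]
    module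
  have R4 : mul (mul u e + mul e u) u = (6*α^2+9*α*β^2) • e + (15*α*β+9*β^3) • u := by
    rw [hue, heu]
    simp only [map_add, map_smul, LinearMap.add_apply, LinearMap.smul_apply, hue, heu, huu]
    module
  obtain ⟨E3, E4⟩ := hcoef _ _ _ _ ((L4.symm.trans (hzin e u u)).trans R4)
  have q1 : 8*α*β + 3*β^3 = 0 := by linear_combination -E2
  have q2 : 6*α*β + 3*β^3 = 0 := by linear_combination -E4
  have q3 : α*β = 0 := by linear_combination (q1 - q2)/2
  have hβ0 : β = 0 := by
    rcases mul_eq_zero.mp q3 with hA | hB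
    · have h3 : β^3 = 0 := by linear_combination q2/3 - 2*β*hA
      exact pow_eq_zero_iff (by norm_num) |>.mp h3
    · exact hB
  have hα0 : α = 0 := by
    have h2 : α^2 = 0 := by linear_combination -E1/5 - (3/5)*α*β*hβ0
    exact pow_eq_zero_iff (by norm_num) |>.mp h2
  have hue0 : mul u e = 0 := by rw [hue, hα0, hβ0]; simp
  have heu0 : mul e u = 0 := by rw [heu, hα0, hβ0]; simp
  have huu0 : mul u u = 0 := by rw [huu, hα0, hβ0]; simp
  -- Step C: the isomorphism
  refine ⟨b.equivFun, fun x y => ?_⟩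
  have hmul : mul x y = ((b.repr x 0) * (b.repr y 0)) • u := by
    conv_lhs => rw [← hrep x, ← hrep y]
    simp only [map_add, map_smul, LinearMap.add_apply, LinearMap.smul_apply,
      hue0, heu0, huu0, ← hu, smul_zero, add_zero]
    module
  have htm : ∀ v w : V2, tm (tbl ![0,1] 0 0 0) v w = (v 0 * w 0) • ![(0:ℂ),1] := by
    intro v w
    simp [tm, tbl, Fin.sum_univ_two]
  show b.equivFun (mul x y) = tm (tbl ![0,1] 0 0 0) (b.equivFun x) (b.equivFun y)
  rw [htm, hmul, map_smul]
  have hx0 : b.equivFun x 0 = b.repr x 0 := by rw [Module.Basis.equivFun_apply]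
  have hy0 : b.equivFun y 0 = b.repr y 0 := by rw [Module.Basis.equivFun_apply]
  rw [hx0, hy0]
  congr 1
  rw [← hb1]
  funext j
  rw [Module.Basis.equivFun_self]
  fin_cases j <;> simp
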